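/- Let t₀ < t₁ and 0 < r₀ < r₁ be extended reals, and let e, g : ℝ × ℝ → ℝ be strictly positive on the open rectangle (t₀, t₁) × (r₀, r₁), such that at every point (t, r) of the rectangle the partial derivative of g with respect to t is zero and the partial derivative of the product e·g with respect to r is zero. Then there exist functions f : ℝ → ℝ and G : ℝ → ℝ, strictly positive on (t₀, t₁) and (r₀, r₁) respectively, such that g(t, r) = G(r) and e(t, r) = f(t)/G(r) for every (t, r) in the rectangle. -/

import Mathlib

lemma aux_const_of_hasDerivAt_zero {S : Set ℝ} (hS : IsOpen S) (hconv : Convex ℝ S)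
    {f : ℝ → ℝ} (hf : ∀ x ∈ S, HasDerivAt f 0 x) {x y : ℝ} (hx : x ∈ S) (hy : y ∈ S) :
    f x = f y := by
  have hF : ∀ z ∈ S, HasFDerivAt f (0 : ℝ →L[ℝ] ℝ) z := fun z hz => by
    have h := (hf z hz).hasFDerivAt
    rwa [show (ContinuousLinearMap.toSpanSingleton ℝ (0 : ℝ)) = 0 by ext x; simp] at h
  refine hconv.is_const_of_fderivWithin_eq_zero
    (fun z hz => (hF z hz).differentiableAt.differentiableWithinAt) (fun z hz => ?_) hx hy
  rw [fderivWithin_of_isOpen hS hz, (hF z hz).fderiv]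

/-- Static factorization of the metric coefficients: if `e, g > 0` on the open rectangle
`(t₀, t₁) × (r₀, r₁)`, `∂g/∂t = 0` and `∂(e·g)/∂r = 0` everywhere on the rectangle, then
`g(t, r) = G(r)` and `e(t, r) = f(t)/G(r)` for some positive functions `f` and `G`. -/
theorem static_factorization (t₀ t₁ r₀ r₁ : EReal) (ht : t₀ < t₁) (hr₀ : 0 < r₀)
    (hr : r₀ < r₁) (e g : ℝ → ℝ → ℝ)
    (hepos : ∀ t r : ℝ, t₀ < (t : EReal) → (t : EReal) < t₁ →
      r₀ < (r : EReal) → (r : EReal) < r₁ → 0 < e t r)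
    (hgpos : ∀ t r : ℝ, t₀ < (t : EReal) → (t : EReal) < t₁ →
      r₀ < (r : EReal) → (r : EReal) < r₁ → 0 < g t r)
    (hgt : ∀ t r : ℝ, t₀ < (t : EReal) → (t : EReal) < t₁ →
      r₀ < (r : EReal) → (r : EReal) < r₁ → HasDerivAt (fun s => g s r) 0 t)
    (hegr : ∀ t r : ℝ, t₀ < (t : EReal) → (t : EReal) < t₁ →
      r₀ < (r : EReal) → (r : EReal) < r₁ → HasDerivAt (fun s => e t s * g t s) 0 r) :
    ∃ f G : ℝ → ℝ,
      (∀ t : ℝ, t₀ < (t : EReal) → (t : EReal) < t₁ → 0 < f t) ∧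
      (∀ r : ℝ, r₀ < (r : EReal) → (r : EReal) < r₁ → 0 < G r) ∧
      ∀ t r : ℝ, t₀ < (t : EReal) → (t : EReal) < t₁ →
        r₀ < (r : EReal) → (r : EReal) < r₁ →
          g t r = G r ∧ e t r = f t / G r := by
  obtain ⟨ts, hts₀, hts₁⟩ := EReal.exists_between_coe_real ht
  obtain ⟨rs, hrs₀, hrs₁⟩ := EReal.exists_between_coe_real hr
  set T : Set ℝ := {s | t₀ < (s : EReal) ∧ (s : EReal) < t₁} with hT
  set R : Set ℝ := {s | r₀ < (s : EReal) ∧ (s : EReal) < r₁} with hR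
  have hTopen : IsOpen T := by
    have : T = (fun x : ℝ => (x : EReal)) ⁻¹' Set.Ioo t₀ t₁ := rfl
    rw [this]; exact isOpen_Ioo.preimage continuous_coe_real_ereal
  have hRopen : IsOpen R := by
    have : R = (fun x : ℝ => (x : EReal)) ⁻¹' Set.Ioo r₀ r₁ := rfl
    rw [this]; exact isOpen_Ioo.preimage continuous_coe_real_ereal
  have hTconv : Convex ℝ T := by
    have : Set.OrdConnected T := by
      constructor
      intro x hx y hy z hz
      exact ⟨lt_of_lt_of_le hx.1 (EReal.coe_le_coe_iff.2 hz.1),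
        lt_of_le_of_lt (EReal.coe_le_coe_iff.2 hz.2) hy.2⟩
    exact this.convex
  have hRconv : Convex ℝ R := by
    have : Set.OrdConnected R := by
      constructor
      intro x hx y hy z hz
      exact ⟨lt_of_lt_of_le hx.1 (EReal.coe_le_coe_iff.2 hz.1),
        lt_of_le_of_lt (EReal.coe_le_coe_iff.2 hz.2) hy.2⟩
    exact this.convex
  refine ⟨fun t => e t rs * g t rs, fun r => g ts r, ?_, ?_, ?_⟩
  · intro t h1 h2
    exact mul_pos (hepos t rs h1 h2 hrs₀ hrs₁) (hgpos t rs h1 h2 hrs₀ hrs₁)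
  · intro r h1 h2
    exact hgpos ts r hts₀ hts₁ h1 h2
  · intro t r h1 h2 h3 h4
    have hgconst : g t r = g ts r :=
      aux_const_of_hasDerivAt_zero hTopen hTconv
        (fun x hx => hgt x r hx.1 hx.2 h3 h4) ⟨h1, h2⟩ ⟨hts₀, hts₁⟩
    have hegconst : e t r * g t r = e t rs * g t rs :=
      aux_const_of_hasDerivAt_zero hRopen hRconv
        (fun x hx => hegr t x h1 h2 hx.1 hx.2) ⟨h3, h4⟩ ⟨hrs₀, hrs₁⟩
    refine ⟨hgconst, ?_⟩
    have hgpos' : g ts r ≠ 0 := (hgpos ts r hts₀ hts₁ h3 h4).ne'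
    field_simp
    rw [← hegconst, hgconst]
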